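/- Let R be a commutative G-graded ring possessing a unique maximal homogeneous ideal, and let M be a finitely generated G-graded R-module. If M is projective as an R-module, then M is free as an R-module. -/

import Mathlib

open DirectSum

section Helper

variable {G R M : Type*} [AddCommGroup G] [DecidableEq G] [CommRing R]
    (𝒜 : G → AddSubgroup R) [GradedRing 𝒜]
    [AddCommGroup M] [Module R M] (ℳ : G → AddSubgroup M)
    [DirectSum.Decomposition ℳ] [SetLike.GradedSMul 𝒜 ℳ]

lemma aux_decompose_smul (a : R) {x : M} {e : G} (hx : x ∈ ℳ e) (d : G) :
    (DirectSum.decompose ℳ (a • x) (d + e) : M) = (DirectSum.decompose 𝒜 a d : R) • x := by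
  induction a using DirectSum.Decomposition.inductionOn 𝒜 with
  | zero => simp
  | @homogeneous g a =>
    obtain ⟨a, ha⟩ := a
    have hmem : a • x ∈ ℳ (g + e) := by
      simpa using SetLike.GradedSMul.smul_mem ha hx
    by_cases h : g = d
    · subst h
      rw [DirectSum.decompose_of_mem_same ℳ hmem, DirectSum.decompose_of_mem_same 𝒜 ha]
    · rw [DirectSum.decompose_of_mem_ne ℳ hmem (fun hc => h (add_right_cancel hc)),
        DirectSum.decompose_of_mem_ne 𝒜 ha h, zero_smul]
  | add b c hb hc =>
    rw [add_smul, DirectSum.decompose_add, DirectSum.add_apply,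
      DirectSum.decompose_add, DirectSum.add_apply]
    push_cast
    rw [hb, hc, add_smul]

end Helper

/-- Let `R` be a commutative `G`-graded ring possessing a unique maximal homogeneous ideal
and let `M` be a finitely generated `G`-graded `R`-module. If `M` is projective as an
`R`-module, then `M` is free as an `R`-module. -/
theorem graded_projective_free_of_unique_maximal_homogeneous {G R M : Type*}
    [AddCommGroup G] [DecidableEq G] [CommRing R]
    (𝒜 : G → AddSubgroup R) [GradedRing 𝒜]
    (hunique : ∃! J : Ideal R, Ideal.IsHomogeneous 𝒜 J ∧ J ≠ ⊤ ∧
      ∀ K : Ideal R, Ideal.IsHomogeneous 𝒜 K → K ≠ ⊤ → J ≤ K → K = J)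
    [AddCommGroup M] [Module R M] (ℳ : G → AddSubgroup M)
    [DirectSum.Decomposition ℳ] [SetLike.GradedSMul 𝒜 ℳ]
    [Module.Finite R M] (hproj : Module.Projective R M) :
    Module.Free R M := by
  classical
  obtain ⟨J, ⟨hJhom, hJne, hJmax⟩, hJuniq⟩ := hunique
  -- Every proper homogeneous ideal is contained in `J` (Zorn's lemma).
  have hJle : ∀ I : Ideal R, Ideal.IsHomogeneous 𝒜 I → I ≠ ⊤ → I ≤ J := by
    intro I hIhom hIne
    have hzorn := zorn_le_nonempty₀
      {K : Ideal R | Ideal.IsHomogeneous 𝒜 K ∧ K ≠ ⊤ ∧ I ≤ K} ?_ I ⟨hIhom, hIne, le_rfl⟩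
    · obtain ⟨m, hIm, hmS, hmax⟩ := hzorn
      have hm : m = J := by
        refine hJuniq m ⟨hmS.1, hmS.2.1, ?_⟩
        intro K hK hKne hmK
        have hKS : Ideal.IsHomogeneous 𝒜 K ∧ K ≠ ⊤ ∧ I ≤ K :=
          ⟨hK, hKne, le_trans hmS.2.2 hmK⟩
        exact le_antisymm (hmax hKS hmK) hmK
      exact hm ▸ hIm
    · intro c hcS hc y hy
      refine ⟨sSup c, ⟨?_, ?_, ?_⟩, fun z hz => le_sSup hz⟩
      · intro i r hr
        obtain ⟨K, hKc, hrK⟩ := (Submodule.mem_sSup_of_directed ⟨y, hy⟩ hc.directedOn).mp hr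
        exact le_sSup hKc ((hcS hKc).1 i hrK)
      · intro htop
        have h1 : (1 : R) ∈ sSup c := htop ▸ Submodule.mem_top
        obtain ⟨K, hKc, h1K⟩ := (Submodule.mem_sSup_of_directed ⟨y, hy⟩ hc.directedOn).mp h1
        exact (hcS hKc).2.1 ((Ideal.eq_top_iff_one K).mpr h1K)
      · exact le_trans (hcS hy).2.2 (le_sSup hy)
  -- Every homogeneous element outside `J` is a unit.
  have hunit : ∀ {g : G} {a : R}, a ∈ 𝒜 g → a ∉ J → IsUnit a := by
    intro g a hag haJ
    by_contra hu
    have hhom : Ideal.IsHomogeneous 𝒜 (Ideal.span {a}) := by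
      refine Ideal.homogeneous_span 𝒜 _ ?_
      rintro x hx
      rw [Set.mem_singleton_iff] at hx
      exact ⟨g, hx ▸ hag⟩
    have hne : Ideal.span {a} ≠ ⊤ := fun h => hu (Ideal.span_singleton_eq_top.mp h)
    exact haJ (hJle _ hhom hne (Ideal.subset_span rfl))
  -- Main induction on the number of homogeneous generators.
  have key : ∀ n : ℕ, ∀ x : Fin n → M, ∀ D : Fin n → G,
      (∀ i, x i ∈ ℳ (D i)) → Submodule.span R (Set.range x) = ⊤ → Module.Free R M := by
    intro n
    induction n using Nat.strong_induction_on with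
    | _ n IH =>
    intro x D hx hspan
    by_cases hbad : ∃ (d : G) (v : Fin n → R), (∀ i, v i ∈ 𝒜 (d - D i)) ∧
        (∑ i, v i • x i = 0) ∧ ∃ i, v i ∉ J
    · -- a relation with a unit coefficient: drop a generator
      obtain ⟨d, v, hv, hsum, i, hiJ⟩ := hbad
      obtain ⟨n', rfl⟩ : ∃ n', n = n' + 1 := ⟨n - 1, (Nat.succ_pred_eq_of_pos i.pos).symm⟩
      have hu : IsUnit (v i) := hunit (hv i) hiJ
      have hxi : x i ∈ Submodule.span R (Set.range (x ∘ i.succAbove)) := by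
        have h1 : v i • x i = -∑ j : Fin n', v (i.succAbove j) • x (i.succAbove j) := by
          rw [Fin.sum_univ_succAbove (fun j => v j • x j) i] at hsum
          exact eq_neg_of_add_eq_zero_left hsum
        obtain ⟨b, hb⟩ := hu.exists_left_inv
        have h2 : x i = b • (v i • x i) := by rw [smul_smul, hb, one_smul]
        rw [h2, h1]
        refine Submodule.smul_mem _ _ (neg_mem (Submodule.sum_mem _ fun j _ =>
          Submodule.smul_mem _ _ (Submodule.subset_span ⟨j, rfl⟩)))
      have hspan' : Submodule.span R (Set.range (x ∘ i.succAbove)) = ⊤ := by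
        rw [eq_top_iff, ← hspan, Submodule.span_le]
        rintro _ ⟨j, rfl⟩
        by_cases hj : j = i
        · exact hj ▸ hxi
        · obtain ⟨j', rfl⟩ := Fin.exists_succAbove_eq hj
          exact Submodule.subset_span ⟨j', rfl⟩
      exact IH n' (by omega) (x ∘ i.succAbove) (D ∘ i.succAbove) (fun j => hx _) hspan'
    · push_neg at hbad
      -- hbad : ∀ d v, homogeneous → relation → all coefficients in J
      set φ : (Fin n → R) →ₗ[R] M := Fintype.linearCombination R x with hφdef
      have hφ : ∀ w : Fin n → R, φ w = ∑ j, w j • x j := fun w => rfl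
      have hφtop : LinearMap.range φ = ⊤ := by
        rw [eq_top_iff, ← hspan, Submodule.span_le]
        rintro _ ⟨j, rfl⟩
        refine ⟨Pi.single j 1, ?_⟩
        rw [hφ]
        simp [Pi.single_apply]
      have hsurj : Function.Surjective φ := LinearMap.range_eq_top.mp hφtop
      obtain ⟨s, hs⟩ := Module.projective_lifting_property φ LinearMap.id hsurj
      have hsφ : ∀ m : M, φ (s m) = m := fun m => by
        simpa using LinearMap.congr_fun hs m
      set K := LinearMap.ker φ with hKdef
      -- components of kernel elements are in the kernel
      have hKcomp : ∀ v ∈ K, ∀ d : G,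
          (fun j => (DirectSum.decompose 𝒜 (v j) (d - D j) : R)) ∈ K := by
        intro v hv d
        have hterm : ∀ j, (DirectSum.decompose 𝒜 (v j) (d - D j) : R) • x j
            = (DirectSum.decompose ℳ (v j • x j) d : M) := by
          intro j
          have h := aux_decompose_smul 𝒜 ℳ (v j) (hx j) (d - D j)
          rw [sub_add_cancel] at h
          exact h.symm
        rw [LinearMap.mem_ker, hφ] at hv ⊢
        calc ∑ j, (DirectSum.decompose 𝒜 (v j) (d - D j) : R) • x j
            = ∑ j, (DirectSum.decompose ℳ (v j • x j) d : M) :=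
              Finset.sum_congr rfl fun j _ => hterm j
          _ = (DirectSum.decompose ℳ (∑ j, v j • x j) d : M) := by
              rw [DirectSum.decompose_sum, DFinsupp.finset_sum_apply,
                AddSubmonoidClass.coe_finset_sum]
          _ = 0 := by rw [hv]; simp
      -- all coordinates of kernel elements lie in J
      have hKJ : ∀ v ∈ K, ∀ j, v j ∈ J := by
        intro v hv j
        have hcompJ : ∀ g : G, (DirectSum.decompose 𝒜 (v j) g : R) ∈ J := by
          intro g
          have h1 := hKcomp v hv (g + D j)
          rw [LinearMap.mem_ker, hφ] at h1
          have h2 := hbad (g + D j)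
            (fun j' => (DirectSum.decompose 𝒜 (v j') (g + D j - D j') : R))
            (fun j' => SetLike.coe_mem _) h1 j
          rwa [add_sub_cancel_right] at h2
        have hsum : v j = ∑ g ∈ (DirectSum.decompose 𝒜 (v j)).support,
            (DirectSum.decompose 𝒜 (v j) g : R) :=
          (DirectSum.sum_support_decompose 𝒜 (v j)).symm
        rw [hsum]
        exact Ideal.sum_mem _ fun g _ => hcompJ g
      -- K is finitely generated (direct summand of a finite free module)
      set q : (Fin n → R) →ₗ[R] (Fin n → R) := LinearMap.id - s ∘ₗ φ with hq
      have hqapp : ∀ w, q w = w - s (φ w) := fun w => rfl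
      have hqK : ∀ w, q w ∈ K := by
        intro w
        rw [LinearMap.mem_ker, hqapp, map_sub, hsφ, sub_self]
      have hqfix : ∀ v ∈ K, q v = v := by
        intro v hv
        rw [LinearMap.mem_ker] at hv
        rw [hqapp, hv, map_zero, sub_zero]
      have hKfg : K.FG := by
        have hKr : K = LinearMap.range q := by
          apply le_antisymm
          · intro v hv; exact ⟨v, hqfix v hv⟩
          · rintro _ ⟨w, rfl⟩; exact hqK w
        rw [hKr, LinearMap.range_eq_map]
        exact Submodule.FG.map q (Module.finite_def.mp inferInstance)
      -- K ≤ J • K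
      have hKJK : K ≤ J • K := by
        intro v hv
        have h0 : ∑ j, v j • (Pi.single j (1 : R) : Fin n → R) = v := by
          ext j'
          simp [Pi.single_apply, Finset.sum_ite_eq']
        have hv' : v = ∑ j, v j • q (Pi.single j (1 : R)) := by
          calc v = q v := (hqfix v hv).symm
            _ = q (∑ j, v j • (Pi.single j (1 : R) : Fin n → R)) := by rw [h0]
            _ = ∑ j, v j • q (Pi.single j (1 : R)) := by rw [map_sum]; simp only [map_smul]
        rw [hv']
        exact Submodule.sum_mem _ fun j _ =>
          Submodule.smul_mem_smul (hKJ v hv j) (hqK _)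
      -- Nakayama: get r with (r - 1) ∈ J killing K
      obtain ⟨r, hr1, hr0⟩ :=
        Submodule.exists_sub_one_mem_and_smul_eq_zero_of_fg_of_le_smul J K hKfg hKJK
      set r0 : R := (DirectSum.decompose 𝒜 r 0 : R) with hr0def
      have hr0J : r0 ∉ J := by
        intro h
        apply hJne
        rw [Ideal.eq_top_iff_one]
        have h1 : r0 - 1 ∈ J := by
          have h2 := hJhom 0 hr1
          have h3 : (DirectSum.decompose 𝒜 (r - 1) 0 : R) = r0 - 1 := by
            rw [DirectSum.decompose_sub, DirectSum.sub_apply]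
            push_cast
            rw [DirectSum.decompose_of_mem_same 𝒜 (SetLike.one_mem_graded 𝒜)]
          rwa [h3] at h2
        have h4 := J.sub_mem h h1
        simpa using h4
      have hr0u : IsUnit r0 := hunit (SetLike.coe_mem _) hr0J
      -- kernel is trivial
      have hK : K = ⊥ := by
        rw [eq_bot_iff]
        intro v hv
        have hcomp0 : ∀ d : G, ∀ j, (DirectSum.decompose 𝒜 (v j) (d - D j) : R) = 0 := by
          intro d j
          have hwK := hKcomp v hv d
          have hrw := hr0 _ hwK
          have h1 : r * (DirectSum.decompose 𝒜 (v j) (d - D j) : R) = 0 := by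
            have h1' := congrFun hrw j
            simpa using h1'
          have h2 : (DirectSum.decompose 𝒜
              (r * (DirectSum.decompose 𝒜 (v j) (d - D j) : R)) (0 + (d - D j)) : R)
              = r0 * (DirectSum.decompose 𝒜 (v j) (d - D j) : R) :=
            DirectSum.coe_decompose_mul_add_of_right_mem 𝒜 (SetLike.coe_mem _)
          have h3 : r0 * (DirectSum.decompose 𝒜 (v j) (d - D j) : R) = 0 := by
            rw [← h2, h1]
            simp
          exact (IsUnit.mul_right_eq_zero hr0u).mp h3
        have hvz : ∀ j, v j = 0 := by
          intro j
          rw [← DirectSum.sum_support_decompose 𝒜 (v j)]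
          refine Finset.sum_eq_zero fun g _ => ?_
          have h5 := hcomp0 (g + D j) j
          rwa [add_sub_cancel_right] at h5
        have hv0 : v = 0 := funext hvz
        rw [hv0]
        simp
      have hinj : Function.Injective φ := by
        rw [← LinearMap.ker_eq_bot]
        exact hK
      exact Module.Free.of_equiv (LinearEquiv.ofBijective φ ⟨hinj, hsurj⟩)
  -- produce a homogeneous finite generating family
  obtain ⟨n, x, hxspan⟩ := Module.Finite.exists_fin (R := R) (M := M)
  let ι := (j : Fin n) × {g : G // g ∈ (DirectSum.decompose ℳ (x j)).support}
  let y : ι → M := fun p => (DirectSum.decompose ℳ (x p.1) p.2.1 : M)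
  let Dy : ι → G := fun p => p.2.1
  have hy : ∀ p : ι, y p ∈ ℳ (Dy p) := fun p => SetLike.coe_mem _
  have hyspan : Submodule.span R (Set.range y) = ⊤ := by
    rw [eq_top_iff, ← hxspan, Submodule.span_le]
    rintro _ ⟨j, rfl⟩
    rw [← DirectSum.sum_support_decompose ℳ (x j)]
    refine Submodule.sum_mem _ fun g hg => ?_
    exact Submodule.subset_span ⟨⟨j, g, hg⟩, rfl⟩
  let e := (Fintype.equivFin ι).symm
  refine key (Fintype.card ι) (y ∘ e) (Dy ∘ e) (fun i => hy _) ?_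
  rw [Set.range_comp, Equiv.range_eq_univ, Set.image_univ, hyspan]
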